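/- Let X be a complex Banach space, T a bounded linear operator on X with ‖T‖ ≤ 1, and P a bounded projection (P ∘ P = P) on X with ‖P‖ ≤ 1, PT = TP, and TP = P. Then T is weakly P-ergodic (i.e. δ_P(Tⁿ) → 0 as n → ∞) if and only if r(T − P) < 1. -/
import Mathlib


open Filter Topology

/-- The generalized Dobrushin ergodicity coefficient of `T` with respect to `P`:
`δ_P(T) = sup {‖T x‖ : P x = 0, ‖x‖ ≤ 1}`. -/
noncomputable def dobrushinCoeff {X : Type*} [NormedAddCommGroup X] [NormedSpace ℂ X]
    (P T : X →L[ℂ] X) : ℝ :=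
  sSup {r : ℝ | ∃ x : X, P x = 0 ∧ ‖x‖ ≤ 1 ∧ r = ‖T x‖}

section Aux

variable {X : Type*} [NormedAddCommGroup X] [NormedSpace ℂ X]

lemma dob_bddAbove (P S : X →L[ℂ] X) :
    BddAbove {r : ℝ | ∃ x : X, P x = 0 ∧ ‖x‖ ≤ 1 ∧ r = ‖S x‖} := by
  refine ⟨‖S‖, ?_⟩
  rintro r ⟨x, hx, hx1, rfl⟩
  calc ‖S x‖ ≤ ‖S‖ * ‖x‖ := S.le_opNorm x
    _ ≤ ‖S‖ * 1 := by gcongr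
    _ = ‖S‖ := mul_one _

lemma dob_nonneg (P S : X →L[ℂ] X) : 0 ≤ dobrushinCoeff P S :=
  le_csSup (dob_bddAbove P S) ⟨0, by simp⟩

lemma dob_key (P S : X →L[ℂ] X) {y : X} (hy : P y = 0) :
    ‖S y‖ ≤ dobrushinCoeff P S * ‖y‖ := by
  rcases eq_or_ne y 0 with rfl | hy0
  · simp [dob_nonneg P S]
  · have hny : (0:ℝ) < ‖y‖ := norm_pos_iff.mpr hy0
    set c : ℂ := ((‖y‖⁻¹ : ℝ) : ℂ) with hc
    have hcnorm : ‖c‖ = ‖y‖⁻¹ := by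
      simp [hc, abs_of_nonneg (inv_nonneg.mpr hny.le)]
    have hz : ‖S (c • y)‖ ≤ dobrushinCoeff P S := by
      refine le_csSup (dob_bddAbove P S) ⟨c • y, ?_, ?_, rfl⟩
      · rw [map_smul, hy, smul_zero]
      · rw [norm_smul, hcnorm, inv_mul_cancel₀ hny.ne']
    rw [map_smul, norm_smul, hcnorm] at hz
    calc ‖S y‖ = ‖y‖ * (‖y‖⁻¹ * ‖S y‖) := by field_simp
      _ ≤ ‖y‖ * dobrushinCoeff P S := by gcongr
      _ = dobrushinCoeff P S * ‖y‖ := mul_comm _ _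

lemma dob_le_norm_sub (P S : X →L[ℂ] X) : dobrushinCoeff P S ≤ ‖S - P‖ := by
  refine Real.sSup_le ?_ (norm_nonneg _)
  rintro r ⟨x, hx, hx1, rfl⟩
  have h : S x = (S - P) x := by simp [hx]
  rw [h]
  calc ‖(S - P) x‖ ≤ ‖S - P‖ * ‖x‖ := (S - P).le_opNorm x
    _ ≤ ‖S - P‖ * 1 := by gcongr
    _ = ‖S - P‖ := mul_one _

lemma norm_sub_le_two_dob (P S : X →L[ℂ] X) (hProj : P.comp P = P)
    (hSP : S.comp P = P) (hPnorm : ‖P‖ ≤ 1) :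
    ‖S - P‖ ≤ 2 * dobrushinCoeff P S := by
  refine ContinuousLinearMap.opNorm_le_bound _
    (by have := dob_nonneg P S; linarith) fun x => ?_
  have hPP : P (P x) = P x := congrFun (congrArg DFunLike.coe hProj) x
  have hSPx : S (P x) = P x := congrFun (congrArg DFunLike.coe hSP) x
  have h1 : P (x - P x) = 0 := by rw [map_sub, hPP, sub_self]
  have h2 : (S - P) x = S (x - P x) := by
    rw [map_sub, hSPx]; simp
  have h3 : ‖x - P x‖ ≤ 2 * ‖x‖ := by
    calc ‖x - P x‖ ≤ ‖x‖ + ‖P x‖ := norm_sub_le _ _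
      _ ≤ ‖x‖ + ‖P‖ * ‖x‖ := by gcongr; exact P.le_opNorm x
      _ ≤ ‖x‖ + 1 * ‖x‖ := by gcongr
      _ = 2 * ‖x‖ := by ring
  rw [h2]
  calc ‖S (x - P x)‖ ≤ dobrushinCoeff P S * ‖x - P x‖ := dob_key P S h1
    _ ≤ dobrushinCoeff P S * (2 * ‖x‖) := by
        have := dob_nonneg P S; gcongr
    _ = 2 * dobrushinCoeff P S * ‖x‖ := by ring

lemma pow_comp_proj (T P : X →L[ℂ] X) (hTP : T.comp P = P) :
    ∀ n : ℕ, (T ^ n).comp P = P := by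
  intro n
  induction n with
  | zero => simp [ContinuousLinearMap.one_def]
  | succ n ih =>
      rw [pow_succ', ContinuousLinearMap.mul_def, ContinuousLinearMap.comp_assoc, ih, hTP]

end Aux

theorem stmt8 {X : Type*} [NormedAddCommGroup X] [NormedSpace ℂ X] [CompleteSpace X]
    (T P : X →L[ℂ] X) (hT : ‖T‖ ≤ 1) (hPnorm : ‖P‖ ≤ 1)
    (hProj : P.comp P = P) (hComm : P.comp T = T.comp P) (hTP : T.comp P = P) :
    Tendsto (fun n : ℕ => dobrushinCoeff P (T ^ n)) atTop (𝓝 0) ↔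
      spectralRadius ℂ (T - P) < 1 := by
  have hPT : P.comp T = P := hComm.trans hTP
  set Q := T - P with hQdef
  have hpow : ∀ n : ℕ, (T ^ n).comp P = P := pow_comp_proj T P hTP
  have hpowm : ∀ n : ℕ, T ^ n * P = P := fun n => hpow n
  have hPTm : P * T = P := hPT
  have hPPm : P * P = P := hProj
  have hQn : ∀ n : ℕ, Q ^ (n + 1) = T ^ (n + 1) - P := by
    intro n
    induction n with
    | zero => simp [hQdef]
    | succ n ih =>
        rw [pow_succ, ih, hQdef, sub_mul, mul_sub, mul_sub, ← pow_succ, hpowm, hPTm, hPPm]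
        abel
  have hd_le : ∀ n : ℕ, dobrushinCoeff P (T ^ n) ≤ ‖T ^ n - P‖ :=
    fun n => dob_le_norm_sub P _
  have hn_le : ∀ n : ℕ, ‖T ^ n - P‖ ≤ 2 * dobrushinCoeff P (T ^ n) :=
    fun n => norm_sub_le_two_dob P _ hProj (hpow n) hPnorm
  constructor
  · intro h
    have hnorm : Tendsto (fun n : ℕ => ‖T ^ n - P‖) atTop (𝓝 0) := by
      refine squeeze_zero (fun n => norm_nonneg _) hn_le ?_
      simpa using h.const_mul (2 : ℝ)
    obtain ⟨N, hN⟩ := eventually_atTop.mp (hnorm.eventually (gt_mem_nhds one_pos))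
    have hlt : ‖T ^ (N + 1) - P‖ < 1 := hN (N + 1) (Nat.le_succ N)
    have hQlt : (‖Q ^ (N + 1)‖₊ : ENNReal) < 1 := by
      rw [hQn N]
      exact_mod_cast hlt
    have hone : (‖(1 : X →L[ℂ] X)‖₊ : ENNReal) ≤ 1 := by
      have : ‖(1 : X →L[ℂ] X)‖ ≤ 1 := ContinuousLinearMap.norm_id_le
      exact_mod_cast this
    have hexp : (0:ℝ) < 1 / (N + 1 : ℝ) := by positivity
    calc spectralRadius ℂ Q
        ≤ (‖Q ^ (N + 1)‖₊ : ENNReal) ^ (1 / (N + 1) : ℝ) *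
            (‖(1 : X →L[ℂ] X)‖₊ : ENNReal) ^ (1 / (N + 1) : ℝ) :=
          spectrum.spectralRadius_le_pow_nnnorm_pow_one_div ℂ Q N
      _ ≤ (‖Q ^ (N + 1)‖₊ : ENNReal) ^ (1 / (N + 1) : ℝ) * 1 ^ (1 / (N + 1) : ℝ) := by
          gcongr
      _ = (‖Q ^ (N + 1)‖₊ : ENNReal) ^ (1 / (N + 1) : ℝ) := by
          rw [ENNReal.one_rpow, mul_one]
      _ < 1 := ENNReal.rpow_lt_one hQlt hexp
  · intro h
    obtain ⟨c, hrc, hc1⟩ := exists_between h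
    have hcne : c ≠ ⊤ := (hc1.trans ENNReal.one_lt_top).ne
    have hgel := spectrum.pow_nnnorm_pow_one_div_tendsto_nhds_spectralRadius Q
    have hev : ∀ᶠ n : ℕ in atTop, (‖Q ^ n‖₊ : ENNReal) ^ (1 / (n:ℝ)) < c :=
      hgel.eventually_lt_const hrc
    set c' : ℝ := c.toReal with hc'
    have hc'1 : c' < 1 := by
      rw [hc']
      exact (ENNReal.toReal_lt_toReal hcne ENNReal.one_ne_top).mpr
        (by simpa using hc1)
    have hc'0 : 0 ≤ c' := ENNReal.toReal_nonneg
    have hbound : ∀ᶠ n : ℕ in atTop, ‖Q ^ n‖ ≤ c' ^ n := by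
      filter_upwards [hev, eventually_ge_atTop 1] with n hn hn1
      have hnne : (n:ℝ) ≠ 0 := by positivity
      have hx : (‖Q ^ n‖₊ : ENNReal) = ((‖Q ^ n‖₊ : ENNReal) ^ (1 / (n:ℝ))) ^ (n:ℝ) := by
        rw [← ENNReal.rpow_mul, one_div, inv_mul_cancel₀ hnne, ENNReal.rpow_one]
      have hle : (‖Q ^ n‖₊ : ENNReal) ≤ c ^ n := by
        rw [hx, ← ENNReal.rpow_natCast c n]
        exact ENNReal.rpow_le_rpow hn.le (Nat.cast_nonneg n)
      have h2 : ((‖Q ^ n‖₊ : ENNReal)).toReal ≤ (c ^ n).toReal :=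
        ENNReal.toReal_mono (by simp [ENNReal.pow_ne_top hcne]) hle
      simpa [ENNReal.toReal_pow] using h2
    have hnorm : Tendsto (fun n : ℕ => ‖Q ^ n‖) atTop (𝓝 0) :=
      squeeze_zero' (Eventually.of_forall fun n => norm_nonneg _) hbound
        (tendsto_pow_atTop_nhds_zero_of_lt_one hc'0 hc'1)
    refine squeeze_zero' (Eventually.of_forall fun n => dob_nonneg P _) ?_ hnorm
    filter_upwards [eventually_ge_atTop 1] with n hn1
    obtain ⟨m, rfl⟩ := Nat.exists_eq_add_of_le hn1
    have : Q ^ (1 + m) = T ^ (1 + m) - P := by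
      rw [add_comm 1 m, hQn m]
    rw [this] at *
    exact hd_le (1 + m)
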